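/- arXiv:1805.02581 — 2 statements merged into one kernel-verified Lean document; each statement's English description precedes it below -/
import Mathlib

section
/- Let Ω ⊆ ℝ^N be a bounded open set and let A be a nonempty bounded subset of ℝ^N with closure(A) ⊆ Ω and of Lebesgue measure zero. If γ is a positive real number with γ < N − upper box dimension of A, then the function x ↦ d(x,A)^(−γ) belongs to L^1(Ω). -/
open Metric Filter Set MeasureTheory


/-- The least number of open balls of radius `δ` needed to cover `A`
(defined as `0` by convention if no finite cover exists). -/
noncomputable def coveringNumber {X : Type*} [PseudoMetricSpace X] (δ : ℝ) (A : Set X) : ℕ :=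
  sInf {n : ℕ | ∃ t : Finset X, t.card = n ∧ A ⊆ ⋃ x ∈ t, Metric.ball x δ}

/-- Upper box (Minkowski) dimension of a set in a metric space. -/
noncomputable def upperBoxDim {X : Type*} [PseudoMetricSpace X] (A : Set X) : ℝ :=
  Filter.limsup (fun δ : ℝ => Real.log (coveringNumber δ A : ℝ) / Real.log (1 / δ))
    (nhdsWithin 0 (Set.Ioi 0))

/-- Lower box (Minkowski) dimension of a set in a metric space. -/
noncomputable def lowerBoxDim {X : Type*} [PseudoMetricSpace X] (A : Set X) : ℝ :=
  Filter.liminf (fun δ : ℝ => Real.log (coveringNumber δ A : ℝ) / Real.log (1 / δ))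
    (nhdsWithin 0 (Set.Ioi 0))

open scoped ENNReal NNReal

namespace HPaux

/-- The defining set of the covering number is nonempty for totally bounded sets. -/
lemma covSet_nonempty {X : Type*} [PseudoMetricSpace X] {A : Set X}
    (hA : TotallyBounded A) {δ : ℝ} (hδ : 0 < δ) :
    {n : ℕ | ∃ t : Finset X, t.card = n ∧ A ⊆ ⋃ x ∈ t, Metric.ball x δ}.Nonempty := by
  obtain ⟨t, htf, hts⟩ := Metric.totallyBounded_iff.1 hA δ hδ
  refine ⟨htf.toFinset.card, htf.toFinset, rfl, ?_⟩
  intro x hx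
  obtain ⟨y, hy, hxy⟩ := Set.mem_iUnion₂.1 (hts hx)
  exact Set.mem_iUnion₂.2 ⟨y, htf.mem_toFinset.2 hy, hxy⟩

lemma covMem {X : Type*} [PseudoMetricSpace X] {A : Set X}
    (hA : TotallyBounded A) {δ : ℝ} (hδ : 0 < δ) :
    ∃ t : Finset X, t.card = coveringNumber δ A ∧ A ⊆ ⋃ x ∈ t, Metric.ball x δ :=
  Nat.sInf_mem (covSet_nonempty hA hδ)

lemma cov_pos {X : Type*} [PseudoMetricSpace X] {A : Set X} (hAne : A.Nonempty)
    (hA : TotallyBounded A) {δ : ℝ} (hδ : 0 < δ) :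
    0 < coveringNumber δ A := by
  rcases covMem hA hδ with ⟨t, htc, hcov⟩
  rcases Nat.eq_zero_or_pos (coveringNumber δ A) with h | h
  · exfalso
    rw [h, Finset.card_eq_zero] at htc
    subst htc
    obtain ⟨a, ha⟩ := hAne
    simpa using hcov ha
  · exact h

variable {N : ℕ}

lemma nontrivial_ES (hN : 0 < N) : Nontrivial (EuclideanSpace ℝ (Fin N)) := by
  haveI : Nonempty (Fin N) := ⟨⟨0, hN⟩⟩
  infer_instance

lemma totB {A : Set (EuclideanSpace ℝ (Fin N))} (hAb : Bornology.IsBounded A) :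
    TotallyBounded A :=
  hAb.isCompact_closure.totallyBounded.subset subset_closure

/-- Covering number controls the volume of the sublevel set of the distance function. -/
lemma volume_sublevel_le (hN : 0 < N) {A : Set (EuclideanSpace ℝ (Fin N))}
    (hAne : A.Nonempty) (hAb : Bornology.IsBounded A) {δ : ℝ} (hδ : 0 < δ) :
    volume {x : EuclideanSpace ℝ (Fin N) | infDist x A < δ} ≤
      (coveringNumber δ A : ℝ≥0∞) *
        (ENNReal.ofReal ((2 * δ) ^ N) * volume (ball (0 : EuclideanSpace ℝ (Fin N)) 1)) := by
  haveI := nontrivial_ES hN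
  obtain ⟨t, htcard, htcov⟩ := covMem (totB hAb) hδ
  have hsub : {x : EuclideanSpace ℝ (Fin N) | infDist x A < δ} ⊆ ⋃ y ∈ t, ball y (2 * δ) := by
    intro x hx
    obtain ⟨a, haA, hax⟩ := (infDist_lt_iff hAne).1 hx
    obtain ⟨y, hy, hay⟩ := Set.mem_iUnion₂.1 (htcov haA)
    refine Set.mem_iUnion₂.2 ⟨y, hy, ?_⟩
    rw [mem_ball] at hay ⊢
    calc dist x y ≤ dist x a + dist a y := dist_triangle x a y
      _ < δ + δ := add_lt_add hax hay
      _ = 2 * δ := by ring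
  calc volume {x : EuclideanSpace ℝ (Fin N) | infDist x A < δ}
      ≤ volume (⋃ y ∈ t, ball y (2 * δ)) := measure_mono hsub
    _ ≤ ∑ y ∈ t, volume (ball y (2 * δ)) := measure_biUnion_finset_le _ _
    _ = ∑ _y ∈ t, ENNReal.ofReal ((2 * δ) ^ N) *
          volume (ball (0 : EuclideanSpace ℝ (Fin N)) 1) := by
        refine Finset.sum_congr rfl fun y _ => ?_
        rw [Measure.addHaar_ball volume y (by positivity : (0:ℝ) ≤ 2 * δ),
          finrank_euclideanSpace_fin]
    _ = (coveringNumber δ A : ℝ≥0∞) *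
          (ENNReal.ofReal ((2 * δ) ^ N) * volume (ball (0 : EuclideanSpace ℝ (Fin N)) 1)) := by
        rw [Finset.sum_const, htcard, nsmul_eq_mul]

/-- Packing bound: the covering number of a bounded set grows at most like `δ ^ (-N)`. -/
lemma cov_le (hN : 0 < N) {A : Set (EuclideanSpace ℝ (Fin N))}
    (hAne : A.Nonempty) (hAb : Bornology.IsBounded A) :
    ∃ C : ℝ, 1 ≤ C ∧ ∀ δ : ℝ, 0 < δ → δ ≤ 1 → (coveringNumber δ A : ℝ) * δ ^ N ≤ C := by
  classical
  haveI := nontrivial_ES hN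
  obtain ⟨R, hR⟩ := (Metric.isBounded_iff_subset_closedBall (0 : EuclideanSpace ℝ (Fin N))).1 hAb
  set B := volume (ball (0 : EuclideanSpace ℝ (Fin N)) 1) with hBdef
  have hB0 : B ≠ 0 := (measure_ball_pos volume _ one_pos).ne'
  have hBt : B ≠ ⊤ := measure_ball_lt_top.ne
  have hBtR : 0 < B.toReal := ENNReal.toReal_pos hB0 hBt
  set V := volume (closedBall (0 : EuclideanSpace ℝ (Fin N)) (|R| + 2)) with hVdef
  have hVt : V ≠ ⊤ := measure_closedBall_lt_top.ne
  refine ⟨V.toReal * 2 ^ N / B.toReal + 1, le_add_of_nonneg_left (by positivity), ?_⟩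
  intro δ hδ0 hδ1
  set K : ℝ := V.toReal / ((δ / 2) ^ N * B.toReal) with hKdef
  -- Zorn's lemma: maximal δ-separated subset of A
  set S : Set (Set (EuclideanSpace ℝ (Fin N))) :=
    {T | T ⊆ A ∧ T.Pairwise fun x y => δ ≤ dist x y} with hSdef
  have hchainc : ∀ c ⊆ S, IsChain (· ⊆ ·) c → c.Nonempty →
      ∃ ub ∈ S, ∀ s ∈ c, s ⊆ ub := by
    intro c hcS hchain hcne
    refine ⟨⋃₀ c, ⟨Set.sUnion_subset fun s hs => (hcS hs).1, ?_⟩,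
      fun s hs => Set.subset_sUnion_of_mem hs⟩
    intro x hx y hy hxy
    obtain ⟨s, hs, hxs⟩ := hx
    obtain ⟨t', ht', hyt⟩ := hy
    rcases hchain.total hs ht' with h | h
    · exact (hcS ht').2 (h hxs) hyt hxy
    · exact (hcS hs).2 hxs (h hyt) hxy
  obtain ⟨T, -, hTmax⟩ :=
    zorn_subset_nonempty S hchainc ∅ ⟨Set.empty_subset _, Set.pairwise_empty _⟩
  have hTS : T ∈ S := hTmax.1
  -- cardinality bound for finite subsets of T
  have key : ∀ F : Finset (EuclideanSpace ℝ (Fin N)), ↑F ⊆ T → (F.card : ℝ) ≤ K := by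
    intro F hF
    have hdisj : (↑F : Set (EuclideanSpace ℝ (Fin N))).PairwiseDisjoint
        fun x => ball x (δ / 2) := by
      intro x hx y hy hxy
      exact ball_disjoint_ball (by linarith [hTS.2 (hF hx) (hF hy) hxy])
    have hsub : (⋃ x ∈ F, ball x (δ / 2)) ⊆
        closedBall (0 : EuclideanSpace ℝ (Fin N)) (|R| + 2) := by
      intro y hy
      obtain ⟨x, hx, hyx⟩ := Set.mem_iUnion₂.1 hy
      rw [mem_ball] at hyx
      have hx0 : dist x (0 : EuclideanSpace ℝ (Fin N)) ≤ R :=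
        mem_closedBall.1 (hR (hTS.1 (hF hx)))
      rw [mem_closedBall]
      calc dist y 0 ≤ dist y x + dist x 0 := dist_triangle _ _ _
        _ ≤ δ / 2 + R := add_le_add hyx.le hx0
        _ ≤ |R| + 2 := by
            have := le_abs_self R
            linarith
    have h1 : (F.card : ℝ≥0∞) * (ENNReal.ofReal ((δ / 2) ^ N) * B) ≤ V := by
      calc (F.card : ℝ≥0∞) * (ENNReal.ofReal ((δ / 2) ^ N) * B)
          = ∑ _x ∈ F, ENNReal.ofReal ((δ / 2) ^ N) * B := by
            rw [Finset.sum_const, nsmul_eq_mul]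
        _ = ∑ x ∈ F, volume (ball x (δ / 2)) := by
            refine (Finset.sum_congr rfl fun x _ => ?_)
            rw [Measure.addHaar_ball volume x (by positivity : (0:ℝ) ≤ δ / 2),
              finrank_euclideanSpace_fin]
        _ = volume (⋃ x ∈ F, ball x (δ / 2)) :=
            (measure_biUnion_finset hdisj fun x _ => measurableSet_ball).symm
        _ ≤ V := measure_mono hsub
    have h2 : (F.card : ℝ) * ((δ / 2) ^ N * B.toReal) ≤ V.toReal := by
      have h3 := ENNReal.toReal_mono hVt h1
      rwa [ENNReal.toReal_mul, ENNReal.toReal_mul, ENNReal.toReal_natCast,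
        ENNReal.toReal_ofReal (by positivity : (0:ℝ) ≤ (δ / 2) ^ N)] at h3
    rw [hKdef, le_div_iff₀ (by positivity : (0:ℝ) < (δ / 2) ^ N * B.toReal)]
    exact h2
  -- T is finite
  have hTfin : T.Finite := by
    by_contra hinf
    obtain ⟨t', ht'T, ht'fin, ht'card⟩ :=
      Set.Infinite.exists_subset_ncard_eq hinf (⌈K⌉₊ + 1)
    have hcard := key ht'fin.toFinset (by simpa using ht'T)
    rw [← Set.ncard_eq_toFinset_card t' ht'fin, ht'card] at hcard
    have hK : K ≤ (⌈K⌉₊ : ℝ) := Nat.le_ceil K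
    push_cast at hcard
    linarith
  set Ft := hTfin.toFinset with hFt
  have hFtcard : (Ft.card : ℝ) ≤ K := key Ft (by simp [hFt])
  have hcover : A ⊆ ⋃ x ∈ Ft, ball x δ := by
    intro a ha
    by_contra hc
    have hc' : ∀ x ∈ T, δ ≤ dist a x := by
      intro x hx
      by_contra h
      push_neg at h
      exact hc (Set.mem_iUnion₂.2 ⟨x, hTfin.mem_toFinset.2 hx, mem_ball.2 h⟩)
    have haT : a ∉ T := by
      intro hmem
      have := hc' a hmem
      rw [dist_self] at this
      linarith
    have hins : insert a T ∈ S :=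
      ⟨Set.insert_subset ha hTS.1,
        Set.pairwise_insert.2
          ⟨hTS.2, fun b hb _ => ⟨hc' b hb, by rw [dist_comm]; exact hc' b hb⟩⟩⟩
    exact haT (hTmax.2 hins (Set.subset_insert a T) (Set.mem_insert a T))
  have hcovle : coveringNumber δ A ≤ Ft.card := Nat.sInf_le ⟨Ft, rfl, hcover⟩
  have hδN : (0:ℝ) < δ ^ N := by positivity
  calc (coveringNumber δ A : ℝ) * δ ^ N
      ≤ (Ft.card : ℝ) * δ ^ N :=
        mul_le_mul_of_nonneg_right (by exact_mod_cast hcovle) hδN.le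
    _ ≤ K * δ ^ N := mul_le_mul_of_nonneg_right hFtcard hδN.le
    _ = V.toReal * 2 ^ N / B.toReal := by
        rw [hKdef, div_pow]
        field_simp
    _ ≤ V.toReal * 2 ^ N / B.toReal + 1 := le_add_of_nonneg_right zero_le_one

/-- The log-ratio defining box dimension is eventually bounded above. -/
lemma isBoundedUnder (hN : 0 < N) {A : Set (EuclideanSpace ℝ (Fin N))}
    (hAne : A.Nonempty) (hAb : Bornology.IsBounded A) :
    IsBoundedUnder (· ≤ ·) (nhdsWithin (0:ℝ) (Set.Ioi 0))
      (fun δ : ℝ => Real.log (coveringNumber δ A : ℝ) / Real.log (1 / δ)) := by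
  obtain ⟨C, hC1, hC⟩ := cov_le hN hAne hAb
  have hC0 : (0:ℝ) < C := lt_of_lt_of_le one_pos hC1
  refine ⟨|Real.log C| / Real.log 2 + N, ?_⟩
  rw [eventually_map]
  filter_upwards [Ioo_mem_nhdsGT_of_mem
    (⟨le_refl (0:ℝ), one_half_pos⟩ : (0:ℝ) ∈ Set.Ico (0:ℝ) (1/2))] with δ hδ
  have hδ0 : (0:ℝ) < δ := hδ.1
  have hδh : δ < 1/2 := hδ.2
  have hlog2 : (0:ℝ) < Real.log 2 := Real.log_pos (by norm_num)
  have hlogδ : Real.log 2 ≤ Real.log (1/δ) := by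
    apply Real.log_le_log (by norm_num)
    rw [le_div_iff₀ hδ0]
    linarith
  have h0 : (0:ℝ) < Real.log (1/δ) := lt_of_lt_of_le hlog2 hlogδ
  have hcovpos : 0 < coveringNumber δ A := cov_pos hAne (totB hAb) hδ0
  have hcovposR : (0:ℝ) < (coveringNumber δ A : ℝ) := by exact_mod_cast hcovpos
  have hcov : (coveringNumber δ A : ℝ) ≤ C / δ ^ N := by
    rw [le_div_iff₀ (by positivity : (0:ℝ) < δ ^ N)]
    exact hC δ hδ0 (by linarith)
  have hlogcov : Real.log (coveringNumber δ A : ℝ) ≤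
      Real.log C + N * Real.log (1/δ) := by
    calc Real.log (coveringNumber δ A : ℝ) ≤ Real.log (C / δ ^ N) :=
          Real.log_le_log hcovposR hcov
      _ = Real.log C - N * Real.log δ := by
          rw [Real.log_div hC0.ne' (by positivity : (δ:ℝ) ^ N ≠ 0), Real.log_pow]
      _ = Real.log C + N * Real.log (1/δ) := by
          rw [Real.log_div one_ne_zero hδ0.ne', Real.log_one]
          ring
  calc Real.log (coveringNumber δ A : ℝ) / Real.log (1/δ)
      ≤ (Real.log C + N * Real.log (1/δ)) / Real.log (1/δ) := by gcongr
    _ = Real.log C / Real.log (1/δ) + N := by field_simp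
    _ ≤ |Real.log C| / Real.log 2 + N := by
        exact add_le_add_left (div_le_div₀ (abs_nonneg _) (le_abs_self _) hlog2 hlogδ) _

end HPaux

/-- Harvey–Polking integrability criterion: if `γ < N - upperBoxDim A`, then
`d(·,A)^(-γ)` is in `L¹(Ω)`. -/
theorem integrable_infDist_rpow {N : ℕ} (Ω : Set (EuclideanSpace ℝ (Fin N)))
    (hΩo : IsOpen Ω) (hΩb : Bornology.IsBounded Ω)
    (A : Set (EuclideanSpace ℝ (Fin N))) (hAne : A.Nonempty)
    (hAb : Bornology.IsBounded A) (hAΩ : closure A ⊆ Ω) (hA0 : MeasureTheory.volume A = 0)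
    (γ : ℝ) (hγ : 0 < γ) (hγdim : γ < (N : ℝ) - upperBoxDim A) :
    MeasureTheory.IntegrableOn (fun x => Metric.infDist x A ^ (-γ)) Ω MeasureTheory.volume := by
  classical
  rcases Nat.eq_zero_or_pos N with hN0 | hN
  · -- `N = 0`: impossible, since then `γ < 0`.
    exfalso
    subst hN0
    haveI : Subsingleton (EuclideanSpace ℝ (Fin 0)) :=
      ⟨fun a b => (WithLp.ext_iff 2).2 (funext fun i => i.elim0)⟩
    obtain ⟨a, ha⟩ := hAne
    have hcov1 : ∀ δ : ℝ, 0 < δ → coveringNumber δ A = 1 := by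
      intro δ hδ
      have h1 : 1 ∈ {n : ℕ | ∃ t : Finset (EuclideanSpace ℝ (Fin 0)), t.card = n ∧
          A ⊆ ⋃ x ∈ t, Metric.ball x δ} := by
        refine ⟨{a}, Finset.card_singleton a, fun x hx => ?_⟩
        refine Set.mem_iUnion₂.2 ⟨a, Finset.mem_singleton_self a, ?_⟩
        rw [mem_ball, Subsingleton.elim x a, dist_self]
        exact hδ
      exact le_antisymm (Nat.sInf_le h1)
        (HPaux.cov_pos ⟨a, ha⟩ (HPaux.totB hAb) hδ)
    have hdim : upperBoxDim A = 0 := by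
      have hcongr : (fun δ : ℝ => Real.log (coveringNumber δ A : ℝ) / Real.log (1 / δ))
          =ᶠ[nhdsWithin (0:ℝ) (Set.Ioi 0)] fun _ => (0:ℝ) := by
        filter_upwards [self_mem_nhdsWithin] with δ hδ
        rw [hcov1 δ hδ]
        simp
      rw [upperBoxDim, limsup_congr hcongr, limsup_const]
    rw [hdim] at hγdim
    norm_num at hγdim
    linarith
  · haveI := HPaux.nontrivial_ES hN
    set g : EuclideanSpace ℝ (Fin N) → ℝ := fun x => infDist x A with hgdef
    have hgc : Continuous g := continuous_infDist_pt A
    have hgm : Measurable g := hgc.measurable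
    have hγne : -γ ≠ 0 := neg_ne_zero.2 hγ.ne'
    have hgnn : ∀ x, 0 ≤ g x := fun x => infDist_nonneg
    have hfeq : (fun x => g x ^ (-γ)) =
        fun x => if g x = 0 then 0 else Real.exp (Real.log (g x) * (-γ)) := by
      funext x
      by_cases h : g x = 0
      · rw [if_pos h, h, Real.zero_rpow hγne]
      · rw [if_neg h, Real.rpow_def_of_pos (lt_of_le_of_ne (hgnn x) (Ne.symm h))]
    have hZm : MeasurableSet {x : EuclideanSpace ℝ (Fin N) | g x = 0} :=
      hgm (measurableSet_singleton 0)
    have hFm : Measurable fun x => g x ^ (-γ) := by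
      rw [hfeq]
      exact Measurable.ite hZm measurable_const
        (Real.measurable_exp.comp ((Real.measurable_log.comp hgm).mul_const (-γ)))
    refine ⟨hFm.aestronglyMeasurable, ?_⟩
    rw [hasFiniteIntegral_iff_ofReal (ae_of_all _ fun x => Real.rpow_nonneg (hgnn x) _)]
    -- set up the exponents
    set d := upperBoxDim A with hd
    set s := (d + ((N:ℝ) - γ)) / 2 with hs
    have hds : d < s := by rw [hs]; linarith
    have hsN : s + γ < N := by rw [hs]; linarith
    have hev : ∀ᶠ δ in nhdsWithin (0:ℝ) (Set.Ioi 0),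
        Real.log (coveringNumber δ A : ℝ) / Real.log (1 / δ) < s :=
      eventually_lt_of_limsup_lt hds (HPaux.isBoundedUnder hN hAne hAb)
    have hev2 : {δ : ℝ | Real.log (coveringNumber δ A : ℝ) / Real.log (1 / δ) < s}
        ∩ Set.Ioo 0 1 ∈ nhdsWithin (0:ℝ) (Set.Ioi 0) :=
      Filter.inter_mem hev (Ioo_mem_nhdsGT_of_mem ⟨le_refl (0:ℝ), one_pos⟩)
    obtain ⟨u, hu0, hu⟩ := mem_nhdsGT_iff_exists_Ioo_subset.1 hev2
    rw [Set.mem_Ioi] at hu0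
    have hcov : ∀ δ : ℝ, 0 < δ → δ < u → (coveringNumber δ A : ℝ) ≤ δ ^ (-s) := by
      intro δ h0 h1
      obtain ⟨hlt, -, hδ1⟩ := hu ⟨h0, h1⟩
      rw [Set.mem_setOf_eq] at hlt
      have hlog : (0:ℝ) < Real.log (1 / δ) := Real.log_pos (by rw [lt_div_iff₀ h0]; linarith)
      have hcp : (0:ℝ) < (coveringNumber δ A : ℝ) := by
        exact_mod_cast HPaux.cov_pos hAne (HPaux.totB hAb) h0
      rw [div_lt_iff₀ hlog] at hlt
      have h2 : (coveringNumber δ A : ℝ) < (1 / δ) ^ s :=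
        (Real.lt_rpow_iff_log_lt hcp (by positivity)).2 hlt
      have h3 : (1 / δ : ℝ) ^ s = δ ^ (-s) := by
        rw [one_div, Real.inv_rpow h0.le, ← Real.rpow_neg h0.le]
      rw [h3] at h2
      exact h2.le
    obtain ⟨k₀, hk₀⟩ := exists_pow_lt_of_lt_one hu0 (by norm_num : (1/2:ℝ) < 1)
    set B := volume (ball (0 : EuclideanSpace ℝ (Fin N)) 1) with hB
    have hBt : B ≠ ⊤ := measure_ball_lt_top.ne
    have hhalfpos : ∀ n : ℕ, (0:ℝ) < (1/2:ℝ)^n := fun n => by positivity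
    have hδu : ∀ k : ℕ, ((1/2:ℝ))^(k₀+k) < u := fun k =>
      lt_of_le_of_lt
        (pow_le_pow_of_le_one (by norm_num) (by norm_num) (Nat.le_add_right k₀ k)) hk₀
    have hvol : ∀ k : ℕ, volume {x : EuclideanSpace ℝ (Fin N) | g x < (1/2:ℝ)^(k₀+k)} ≤
        ENNReal.ofReal (((1/2:ℝ)^(k₀+k)) ^ (-s) * (2 * (1/2:ℝ)^(k₀+k)) ^ N) * B := by
      intro k
      have h0 : (0:ℝ) < (1/2:ℝ)^(k₀+k) := hhalfpos _
      calc volume {x : EuclideanSpace ℝ (Fin N) | g x < (1/2:ℝ)^(k₀+k)}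
          ≤ (coveringNumber ((1/2:ℝ)^(k₀+k)) A : ℝ≥0∞) *
            (ENNReal.ofReal ((2 * (1/2:ℝ)^(k₀+k)) ^ N) * B) :=
            HPaux.volume_sublevel_le hN hAne hAb h0
        _ ≤ ENNReal.ofReal (((1/2:ℝ)^(k₀+k)) ^ (-s)) *
            (ENNReal.ofReal ((2 * (1/2:ℝ)^(k₀+k)) ^ N) * B) := by
            gcongr
            rw [← ENNReal.ofReal_natCast]
            exact ENNReal.ofReal_le_ofReal (hcov _ h0 (hδu k))
        _ = ENNReal.ofReal (((1/2:ℝ)^(k₀+k)) ^ (-s) * (2 * (1/2:ℝ)^(k₀+k)) ^ N) * B := by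
            rw [ENNReal.ofReal_mul (Real.rpow_nonneg h0.le _), mul_assoc]
    -- decompose Ω
    set Z : Set (EuclideanSpace ℝ (Fin N)) := {x | g x = 0} with hZ
    set W : Set (EuclideanSpace ℝ (Fin N)) := Ω ∩ {x | (1/2:ℝ)^k₀ ≤ g x} with hW
    set U : ℕ → Set (EuclideanSpace ℝ (Fin N)) :=
      fun k => {x | (1/2:ℝ)^(k₀+k+1) ≤ g x ∧ g x < (1/2:ℝ)^(k₀+k)} with hUdef
    have hcover : Ω ⊆ (Z ∪ W) ∪ ⋃ k, U k := by
      intro x hx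
      rcases eq_or_lt_of_le (hgnn x) with h0 | h0
      · exact Or.inl (Or.inl h0.symm)
      rcases le_or_gt ((1/2:ℝ)^k₀) (g x) with hbig | hsmall
      · exact Or.inl (Or.inr ⟨hx, hbig⟩)
      · have hex : ∃ n : ℕ, (1/2:ℝ)^n ≤ g x := by
          obtain ⟨n, hn⟩ := exists_pow_lt_of_lt_one h0 (by norm_num : (1/2:ℝ) < 1)
          exact ⟨n, hn.le⟩
        have hmle : (1/2:ℝ)^(Nat.find hex) ≤ g x := Nat.find_spec hex
        have hmgt : k₀ < Nat.find hex := by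
          by_contra h
          push_neg at h
          have : (1/2:ℝ)^k₀ ≤ g x :=
            le_trans (pow_le_pow_of_le_one (by norm_num) (by norm_num) h) hmle
          linarith
        refine Or.inr (Set.mem_iUnion.2 ⟨Nat.find hex - 1 - k₀, ?_, ?_⟩)
        · rw [show k₀ + (Nat.find hex - 1 - k₀) + 1 = Nat.find hex by omega]
          exact hmle
        · have hlt : k₀ + (Nat.find hex - 1 - k₀) < Nat.find hex := by omega
          exact not_le.1 (Nat.find_min hex hlt)
    set F : EuclideanSpace ℝ (Fin N) → ℝ≥0∞ := fun x => ENNReal.ofReal (g x ^ (-γ)) with hF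
    have hZ0 : ∫⁻ x in Z, F x ∂volume = 0 := by
      have hz : ∀ᵐ x ∂(volume : Measure (EuclideanSpace ℝ (Fin N))),
          x ∈ Z → F x = 0 := by
        refine ae_of_all _ fun x hx => ?_
        have hx0 : g x = 0 := hx
        simp only [hF, hx0, Real.zero_rpow hγne, ENNReal.ofReal_zero]
      rw [setLIntegral_congr_fun_ae hZm hz, lintegral_zero]
    have hWle : ∫⁻ x in W, F x ∂volume ≤
        ENNReal.ofReal (((1/2:ℝ)^k₀) ^ (-γ)) * volume Ω := by
      calc ∫⁻ x in W, F x ∂volume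
          ≤ ∫⁻ _x in W, ENNReal.ofReal (((1/2:ℝ)^k₀) ^ (-γ)) ∂volume := by
            refine setLIntegral_mono measurable_const fun x hx => ?_
            exact ENNReal.ofReal_le_ofReal
              (Real.rpow_le_rpow_of_nonpos (hhalfpos k₀) hx.2 (neg_nonpos.2 hγ.le))
        _ = ENNReal.ofReal (((1/2:ℝ)^k₀) ^ (-γ)) * volume W := setLIntegral_const _ _
        _ ≤ ENNReal.ofReal (((1/2:ℝ)^k₀) ^ (-γ)) * volume Ω :=
            mul_le_mul_right (measure_mono Set.inter_subset_left) _
    have hUle : ∀ k : ℕ, ∫⁻ x in U k, F x ∂volume ≤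
        ENNReal.ofReal (((1/2:ℝ)^(k₀+k+1)) ^ (-γ) *
          (((1/2:ℝ)^(k₀+k)) ^ (-s) * (2 * (1/2:ℝ)^(k₀+k)) ^ N)) * B := by
      intro k
      calc ∫⁻ x in U k, F x ∂volume
          ≤ ∫⁻ _x in U k, ENNReal.ofReal (((1/2:ℝ)^(k₀+k+1)) ^ (-γ)) ∂volume := by
            refine setLIntegral_mono measurable_const fun x hx => ?_
            exact ENNReal.ofReal_le_ofReal
              (Real.rpow_le_rpow_of_nonpos (hhalfpos _) hx.1 (neg_nonpos.2 hγ.le))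
        _ = ENNReal.ofReal (((1/2:ℝ)^(k₀+k+1)) ^ (-γ)) * volume (U k) :=
            setLIntegral_const _ _
        _ ≤ ENNReal.ofReal (((1/2:ℝ)^(k₀+k+1)) ^ (-γ)) *
            (ENNReal.ofReal (((1/2:ℝ)^(k₀+k)) ^ (-s) * (2 * (1/2:ℝ)^(k₀+k)) ^ N) * B) :=
            mul_le_mul_right
              (le_trans (measure_mono fun x hx => hx.2) (hvol k)) _
        _ = ENNReal.ofReal (((1/2:ℝ)^(k₀+k+1)) ^ (-γ) *
            (((1/2:ℝ)^(k₀+k)) ^ (-s) * (2 * (1/2:ℝ)^(k₀+k)) ^ N)) * B := by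
            rw [ENNReal.ofReal_mul (Real.rpow_nonneg (hhalfpos (k₀+k+1)).le (-γ)),
              ENNReal.ofReal_mul (Real.rpow_nonneg (hhalfpos (k₀+k)).le (-s))]
            ring
    -- geometric bound
    set ρ : ℝ := (2:ℝ) ^ (γ + s - N) with hρ
    have hρ0 : 0 < ρ := Real.rpow_pos_of_pos two_pos _
    have hρ1 : ρ < 1 := Real.rpow_lt_one_of_one_lt_of_neg one_lt_two (by linarith)
    set C₀ : ℝ := (2:ℝ) ^ (γ + N) * ρ ^ k₀ with hC₀
    have hC₀0 : 0 < C₀ := mul_pos (Real.rpow_pos_of_pos two_pos _) (pow_pos hρ0 _)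
    have hhalf : ∀ n : ℕ, ((1/2:ℝ))^n = (2:ℝ) ^ (-(n:ℝ)) := by
      intro n
      rw [Real.rpow_neg (by norm_num : (0:ℝ) ≤ 2), Real.rpow_natCast, one_div, inv_pow]
    have hkey : ∀ a b : ℝ, ((2:ℝ) ^ a) ^ b = (2:ℝ) ^ (a * b) := fun a b =>
      (Real.rpow_mul (by norm_num : (0:ℝ) ≤ 2) a b).symm
    have hkeyN : ∀ a : ℝ, ((2:ℝ) ^ a) ^ (N:ℕ) = (2:ℝ) ^ (a * N) := fun a => by
      rw [← Real.rpow_natCast ((2:ℝ) ^ a) N, hkey]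
    have hgeo : ∀ k : ℕ, ((1/2:ℝ)^(k₀+k+1)) ^ (-γ) *
        (((1/2:ℝ)^(k₀+k)) ^ (-s) * (2 * (1/2:ℝ)^(k₀+k)) ^ N) = C₀ * ρ ^ k := by
      intro k
      have h2 : (2:ℝ) * (1/2:ℝ)^(k₀+k) = (2:ℝ) ^ (1 - ((k₀+k:ℕ):ℝ)) := by
        rw [hhalf, sub_eq_add_neg, Real.rpow_add two_pos, Real.rpow_one]
      rw [h2, hhalf (k₀+k+1), hhalf (k₀+k), hkey, hkey, hkeyN,
        ← Real.rpow_add two_pos, ← Real.rpow_add two_pos]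
      rw [hC₀, hρ, ← Real.rpow_natCast ((2:ℝ) ^ (γ + s - N)) k₀,
        ← Real.rpow_natCast ((2:ℝ) ^ (γ + s - N)) k, hkey, hkey,
        ← Real.rpow_add two_pos, ← Real.rpow_add two_pos]
      congr 1
      push_cast
      ring
    have hsum : ∑' k : ℕ, ∫⁻ x in U k, F x ∂volume ≤
        (ENNReal.ofReal C₀ * B) * (1 - ENNReal.ofReal ρ)⁻¹ := by
      calc ∑' k : ℕ, ∫⁻ x in U k, F x ∂volume
          ≤ ∑' k : ℕ, (ENNReal.ofReal C₀ * B) * ENNReal.ofReal ρ ^ k := by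
            refine ENNReal.tsum_le_tsum fun k => le_trans (hUle k) (le_of_eq ?_)
            rw [hgeo k, ENNReal.ofReal_mul hC₀0.le, ENNReal.ofReal_pow hρ0.le]
            ring
        _ = (ENNReal.ofReal C₀ * B) * ∑' k : ℕ, ENNReal.ofReal ρ ^ k :=
            ENNReal.tsum_mul_left
        _ = (ENNReal.ofReal C₀ * B) * (1 - ENNReal.ofReal ρ)⁻¹ := by
            rw [ENNReal.tsum_geometric]
    have hchain : ∫⁻ x in Ω, F x ∂volume ≤
        ((∫⁻ x in Z, F x ∂volume) + ∫⁻ x in W, F x ∂volume) +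
          ∑' k : ℕ, ∫⁻ x in U k, F x ∂volume := by
      calc ∫⁻ x in Ω, F x ∂volume
          ≤ ∫⁻ x in (Z ∪ W) ∪ ⋃ k, U k, F x ∂volume := lintegral_mono_set hcover
        _ ≤ (∫⁻ x in Z ∪ W, F x ∂volume) + ∫⁻ x in ⋃ k, U k, F x ∂volume :=
            lintegral_union_le _ _ _
        _ ≤ ((∫⁻ x in Z, F x ∂volume) + ∫⁻ x in W, F x ∂volume) +
              ∑' k : ℕ, ∫⁻ x in U k, F x ∂volume :=
            add_le_add (lintegral_union_le _ _ _) (lintegral_iUnion_le _ _)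
    refine lt_of_le_of_lt hchain ?_
    have h1 : (∫⁻ x in Z, F x ∂volume) + ∫⁻ x in W, F x ∂volume < ⊤ := by
      rw [hZ0, zero_add]
      exact lt_of_le_of_lt hWle (ENNReal.mul_lt_top ENNReal.ofReal_lt_top hΩb.measure_lt_top)
    have h2 : ∑' k : ℕ, ∫⁻ x in U k, F x ∂volume < ⊤ := by
      refine lt_of_le_of_lt hsum ?_
      refine ENNReal.mul_lt_top (ENNReal.mul_lt_top ENNReal.ofReal_lt_top hBt.lt_top) ?_
      rw [ENNReal.inv_lt_top]
      rw [tsub_pos_iff_lt]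
      exact ENNReal.ofReal_lt_one.2 hρ1
    exact ENNReal.add_lt_top.2 ⟨h1, h2⟩
end

section
/- Let Ω ⊆ ℝ^N be a bounded open set, A a nonempty bounded subset with closure(A) ⊆ Ω and Lebesgue measure zero, p > 1, and γ > 0. If γ < (1/p)(N − upper box dimension of A), then the function x ↦ d(x,A)^(−γ) belongs to L^p(Ω). -/
open Metric Filter Set MeasureTheory

open scoped ENNReal NNReal

lemma coveringNumber_spec {X : Type*} [PseudoMetricSpace X] {δ : ℝ} (hδ : 0 < δ)
    {A : Set X} (hA : TotallyBounded A) :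
    ∃ t : Finset X, t.card = coveringNumber δ A ∧ A ⊆ ⋃ x ∈ t, Metric.ball x δ := by
  have hne : {n : ℕ | ∃ t : Finset X, t.card = n ∧ A ⊆ ⋃ x ∈ t, Metric.ball x δ}.Nonempty := by
    obtain ⟨s, hs, hcov⟩ := (Metric.totallyBounded_iff).1 hA δ hδ
    refine ⟨hs.toFinset.card, hs.toFinset, rfl, ?_⟩
    simpa [Set.Finite.mem_toFinset] using hcov
  obtain ⟨t, ht, hcov⟩ := Nat.sInf_mem hne
  exact ⟨t, ht, hcov⟩

lemma one_le_coveringNumber {X : Type*} [PseudoMetricSpace X] {δ : ℝ} (hδ : 0 < δ)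
    {A : Set X} (hA : TotallyBounded A) (hne : A.Nonempty) :
    1 ≤ coveringNumber δ A := by
  obtain ⟨t, ht, hcov⟩ := coveringNumber_spec hδ hA
  rcases Nat.eq_zero_or_pos (coveringNumber δ A) with h | h
  · exfalso
    obtain ⟨a, ha⟩ := hne
    have : t = ∅ := Finset.card_eq_zero.1 (ht.trans h)
    subst this
    simpa using hcov ha
  · exact h


lemma coveringNumber_le_of_cover {X : Type*} [PseudoMetricSpace X] {δ : ℝ} {A : Set X}
    (t : Finset X) (h : A ⊆ ⋃ x ∈ t, Metric.ball x δ) : coveringNumber δ A ≤ t.card :=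
  Nat.sInf_le ⟨t, rfl, h⟩

lemma coveringNumber_poly_bound {N : ℕ} (hN : 0 < N) {A : Set (EuclideanSpace ℝ (Fin N))}
    {R : ℝ} (hR : 0 ≤ R) (hA : A ⊆ closedBall 0 R) :
    ∀ δ ∈ Set.Ioo (0:ℝ) 1, (coveringNumber δ A : ℝ) ≤ (2*R*N+5)^N / δ^N := by
  classical
  intro δ hδ
  obtain ⟨hδ0, hδ1⟩ := hδ
  set h : ℝ := δ / N with hh
  have hNpos : (0:ℝ) < N := by exact_mod_cast hN
  have hhpos : 0 < h := div_pos hδ0 hNpos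
  set M : ℕ := ⌈R / h⌉₊ + 1 with hM
  set I : Finset ℤ := Finset.Icc (-(M:ℤ)) M with hI
  set K : Finset (Fin N → ℤ) := Fintype.piFinset (fun _ => I) with hK
  set g : (Fin N → ℤ) → EuclideanSpace ℝ (Fin N) :=
    fun k => WithLp.toLp 2 (fun i => h * k i : Fin N → ℝ) with hg
  have hcov : A ⊆ ⋃ x ∈ K.image g, Metric.ball x δ := by
    intro x hx
    have hxR : ∀ i, |x i| ≤ R := by
      intro i
      have h1 : ‖x‖ ≤ R := by simpa [mem_closedBall, dist_zero_right] using hA hx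
      have h2 : |x i| ≤ ‖x‖ := by
        have := EuclideanSpace.norm_eq x
        rw [this]
        rw [← Real.sqrt_sq (abs_nonneg (x i))]
        apply Real.sqrt_le_sqrt
        have : |x i|^2 ≤ ∑ j, ‖x j‖^2 :=
          Finset.single_le_sum (f := fun j => ‖x j‖^2) (fun j _ => by positivity)
            (Finset.mem_univ i)
        simpa using this
      linarith
    set k : Fin N → ℤ := fun i => round (x i / h) with hk
    have hkK : k ∈ K := by
      rw [hK, Fintype.mem_piFinset]
      intro i
      rw [hI, Finset.mem_Icc, ← abs_le]
      have h1 : |(k i : ℝ)| ≤ |x i / h| + 1 := by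
        have h2 := abs_sub_round (x i / h)
        have h3 : |(k i : ℝ)| ≤ |x i / h| + 1/2 := by
          calc |(k i : ℝ)| = |x i / h - (x i / h - round (x i / h))| := by rw [hk]; ring_nf
            _ ≤ |x i / h| + |x i / h - round (x i / h)| := abs_sub _ _
            _ ≤ |x i / h| + 1/2 := by linarith [h2]
        linarith
      have h4 : |x i / h| ≤ R / h := by
        rw [abs_div, abs_of_pos hhpos]
        gcongr
        exact hxR i
      have h5 : (R / h) ≤ ⌈R / h⌉₊ := Nat.le_ceil _
      have : |(k i : ℝ)| ≤ (M : ℝ) := by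
        rw [hM]; push_cast; linarith
      exact_mod_cast this
    refine mem_iUnion₂.2 ⟨g k, Finset.mem_image_of_mem g hkK, ?_⟩
    rw [mem_ball, EuclideanSpace.dist_eq]
    have hcoord : ∀ i, dist (x i) (g k i) ^ 2 ≤ (h/2)^2 := by
      intro i
      have h1 : dist (x i) (g k i) = |x i - h * (k i : ℝ)| := by
        rw [Real.dist_eq]
      have h2 : |x i - h * (k i : ℝ)| = h * |x i / h - (k i : ℝ)| := by
        have he : x i - h * (k i : ℝ) = h * (x i / h - (k i : ℝ)) := by field_simp
        rw [he, abs_mul, abs_of_pos hhpos]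
      have h3 : |x i / h - (k i : ℝ)| ≤ 1/2 := by
        simpa [hk] using abs_sub_round (x i / h)
      rw [h1, h2]
      have : h * |x i / h - (k i : ℝ)| ≤ h * (1/2) := by
        exact mul_le_mul_of_nonneg_left h3 hhpos.le
      calc (h * |x i / h - (k i : ℝ)|)^2 ≤ (h * (1/2))^2 := by
            apply sq_le_sq' <;> nlinarith [abs_nonneg (x i / h - (k i : ℝ)), hhpos.le]
        _ = (h/2)^2 := by ring
    calc √(∑ i, dist (x i) (g k i) ^ 2) ≤ √(∑ _i : Fin N, (h/2)^2) := by
          apply Real.sqrt_le_sqrt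
          exact Finset.sum_le_sum fun i _ => hcoord i
      _ = √((N:ℝ) * (h/2)^2) := by rw [Finset.sum_const]; simp [nsmul_eq_mul]
      _ < δ := by
          rw [hh]
          rw [show (N:ℝ) * (δ/N/2)^2 = δ^2 / (4*N) by field_simp; ring]
          have hN1 : (1:ℝ) ≤ N := by exact_mod_cast hN
          have h1 : δ^2 / (4*N) < δ^2 := by
            apply div_lt_self (by positivity)
            nlinarith [hN1]
          calc √(δ^2/(4*N)) < √(δ^2) := by
                apply Real.sqrt_lt_sqrt (by positivity) h1
            _ = δ := Real.sqrt_sq hδ0.le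
  have hcard : ((K.image g).card : ℝ) ≤ (2*R*N+5)^N / δ^N := by
    have h1 : (K.image g).card ≤ K.card := Finset.card_image_le
    have h2 : K.card = (2*M+1)^N := by
      rw [hK, Fintype.card_piFinset]
      simp [hI, Int.card_Icc]
      congr 1
      omega
    have h3 : ((2*M+1 : ℕ) : ℝ) ≤ (2*R*N+5)/δ := by
      have hceil : (⌈R/h⌉₊ : ℝ) ≤ R*N/δ + 1 := by
        have h6 := Nat.ceil_lt_add_one (by positivity : (0:ℝ) ≤ R/h)
        have hRh : R / h = R * N / δ := by rw [hh]; field_simp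
        linarith [hRh ▸ h6]
      have hMle : (M : ℝ) ≤ R*N/δ + 2 := by
        rw [hM]; push_cast; linarith
      push_cast
      rw [le_div_iff₀ hδ0]
      have h5 : (R*N/δ) * δ = R*N := by field_simp
      nlinarith [mul_le_mul_of_nonneg_right hMle hδ0.le, hR, hNpos, hδ1, hδ0]
    calc ((K.image g).card : ℝ) ≤ (K.card : ℝ) := by exact_mod_cast h1
      _ = ((2*M+1 : ℕ) : ℝ)^N := by rw [h2]; push_cast; ring
      _ ≤ ((2*R*N+5)/δ)^N := by
          apply pow_le_pow_left₀ (by positivity) h3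
      _ = (2*R*N+5)^N / δ^N := div_pow _ _ _
  calc (coveringNumber δ A : ℝ) ≤ ((K.image g).card : ℝ) := by
        exact_mod_cast coveringNumber_le_of_cover _ hcov
    _ ≤ (2*R*N+5)^N / δ^N := hcard


variable {N : ℕ}

lemma measure_thick_le [Nontrivial (EuclideanSpace ℝ (Fin N))]
    (A : Set (EuclideanSpace ℝ (Fin N))) (hAne : A.Nonempty)
    (hAtb : TotallyBounded A) {δ : ℝ} (hδ : 0 < δ) :
    volume {x : EuclideanSpace ℝ (Fin N) | infDist x A < 2*δ} ≤
      (coveringNumber δ A) * (ENNReal.ofReal ((3*δ)^N) *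
        volume (ball (0:EuclideanSpace ℝ (Fin N)) 1)) := by
  obtain ⟨t, ht, hcov⟩ := coveringNumber_spec hδ hAtb
  have hsub : {x : EuclideanSpace ℝ (Fin N) | infDist x A < 2*δ} ⊆ ⋃ y ∈ t, ball y (3*δ) := by
    intro x hx
    obtain ⟨a, haA, hax⟩ := (infDist_lt_iff hAne).1 hx
    obtain ⟨y, hyt, hay⟩ := by simpa using hcov haA
    refine mem_iUnion₂.2 ⟨y, hyt, ?_⟩
    have : dist x y ≤ dist x a + dist a y := dist_triangle _ _ _
    simp only [mem_ball]
    calc dist x y ≤ dist x a + dist a y := dist_triangle _ _ _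
      _ < 2*δ + δ := add_lt_add hax hay
      _ = 3*δ := by ring
  calc volume {x : EuclideanSpace ℝ (Fin N) | infDist x A < 2*δ}
      ≤ volume (⋃ y ∈ t, ball y (3*δ)) := measure_mono hsub
    _ ≤ ∑ y ∈ t, volume (ball y (3*δ)) := measure_biUnion_finset_le _ _
    _ = ∑ y ∈ t, ENNReal.ofReal ((3*δ)^N) * volume (ball (0:EuclideanSpace ℝ (Fin N)) 1) := by
        refine Finset.sum_congr rfl fun y _ => ?_
        rw [Measure.addHaar_ball (μ := volume) y (by positivity : (0:ℝ) ≤ 3*δ), finrank_euclideanSpace, Fintype.card_fin]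
    _ = (coveringNumber δ A) * (ENNReal.ofReal ((3*δ)^N) *
        volume (ball (0:EuclideanSpace ℝ (Fin N)) 1)) := by
        rw [Finset.sum_const, ht, nsmul_eq_mul]


lemma eventually_Ioo : ∀ᶠ δ : ℝ in nhdsWithin 0 (Set.Ioi 0), δ ∈ Set.Ioo (0:ℝ) (1/2) := by
  filter_upwards [eventually_mem_nhdsWithin,
    eventually_nhdsWithin_of_eventually_nhds (gt_mem_nhds (by norm_num : (0:ℝ) < 1/2))] with δ h1 h2
  exact ⟨h1, h2⟩

lemma eventually_coveringNumber_le {N : ℕ} (hN : 0 < N)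
    {A : Set (EuclideanSpace ℝ (Fin N))} (hAb : Bornology.IsBounded A) (hAne : A.Nonempty)
    {s : ℝ} (hs : upperBoxDim A < s) :
    ∀ᶠ δ : ℝ in nhdsWithin 0 (Set.Ioi 0), (coveringNumber δ A : ℝ) ≤ δ ^ (-s) := by
  have hAtb : TotallyBounded A := hAb.isCompact_closure.totallyBounded.subset subset_closure
  obtain ⟨R0, hR0⟩ := hAb.subset_closedBall 0
  set R : ℝ := max R0 0 with hR
  have hRnn : 0 ≤ R := le_max_right _ _
  have hAR : A ⊆ closedBall 0 R := hR0.trans (closedBall_subset_closedBall (le_max_left _ _))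
  set C : ℝ := (2*R*N+5)^N with hC
  have hC1 : (1:ℝ) ≤ C := by
    apply one_le_pow₀
    nlinarith [hRnn, (by exact_mod_cast hN : (1:ℝ) ≤ N)]
  -- upper bound for the ratio
  have hbdd : Filter.IsBoundedUnder (· ≤ ·) (nhdsWithin 0 (Set.Ioi 0))
      (fun δ : ℝ => Real.log (coveringNumber δ A : ℝ) / Real.log (1 / δ)) := by
    apply Filter.isBoundedUnder_of_eventually_le (a := (N:ℝ) + |Real.log C| / Real.log 2)
    filter_upwards [eventually_Ioo] with δ hδ
    have hδ0 := hδ.1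
    have hδhalf := hδ.2
    have hδ1 : δ < 1 := by linarith
    have hlog2 : Real.log 2 ≤ Real.log (1/δ) := by
      apply Real.log_le_log (by norm_num)
      rw [le_div_iff₀ hδ0]; linarith
    have hlogpos : (0:ℝ) < Real.log (1/δ) := lt_of_lt_of_le (Real.log_pos (by norm_num)) hlog2
    have hNge1 : (1:ℝ) ≤ (coveringNumber δ A : ℝ) := by
      exact_mod_cast one_le_coveringNumber hδ0 hAtb hAne
    have hb := coveringNumber_poly_bound hN hRnn hAR δ ⟨hδ0, hδ1⟩
    have hlogN : Real.log (coveringNumber δ A : ℝ) ≤ Real.log C + N * Real.log (1/δ) := by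
      calc Real.log (coveringNumber δ A : ℝ) ≤ Real.log (C / δ^N) :=
            Real.log_le_log (by linarith) hb
        _ = Real.log C + N * Real.log (1/δ) := by
            rw [show C / δ^N = C * (1/δ)^N by rw [div_pow]; ring_nf,
              Real.log_mul (by positivity) (by positivity), Real.log_pow, Real.log_pow]
    calc Real.log (coveringNumber δ A : ℝ) / Real.log (1/δ)
        ≤ (Real.log C + N * Real.log (1/δ)) / Real.log (1/δ) := by
          exact (div_le_div_iff_of_pos_right hlogpos).2 hlogN
      _ = Real.log C / Real.log (1/δ) + N := by field_simp
      _ ≤ |Real.log C| / Real.log 2 + N := by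
          apply add_le_add_left
          calc Real.log C / Real.log (1/δ) ≤ |Real.log C| / Real.log (1/δ) := by
                exact (div_le_div_iff_of_pos_right hlogpos).2 (le_abs_self _)
              _ ≤ |Real.log C| / Real.log 2 := by
                apply div_le_div_of_nonneg_left (abs_nonneg _) (Real.log_pos (by norm_num)) hlog2
      _ = (N:ℝ) + |Real.log C| / Real.log 2 := by ring
  have hev := Filter.eventually_lt_of_limsup_lt hs hbdd
  filter_upwards [hev, eventually_Ioo] with δ hδs hδ
  have hδ0 := hδ.1
  have hδ1 : δ < 1 := by linarith [hδ.2]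
  have h1 : (1:ℝ) ≤ (coveringNumber δ A : ℝ) := by
    exact_mod_cast one_le_coveringNumber hδ0 hAtb hAne
  have h2 : (0:ℝ) < Real.log (1 / δ) := Real.log_pos (by rw [lt_div_iff₀ hδ0]; linarith)
  have hlog : Real.log (coveringNumber δ A : ℝ) < s * Real.log (1 / δ) := (div_lt_iff₀ h2).1 hδs
  have hNpos : (0:ℝ) < (coveringNumber δ A : ℝ) := lt_of_lt_of_le one_pos h1
  have hmain : (coveringNumber δ A : ℝ) < (1/δ) ^ s := by
    rw [Real.rpow_def_of_pos (by positivity : (0:ℝ) < 1/δ)]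
    calc (coveringNumber δ A : ℝ) = Real.exp (Real.log (coveringNumber δ A : ℝ)) :=
          (Real.exp_log hNpos).symm
      _ < Real.exp (Real.log (1/δ) * s) := by
          apply Real.exp_lt_exp.2; rw [mul_comm]; exact hlog
  have heq : (1/δ) ^ s = δ ^ (-s) := by
    rw [one_div, Real.inv_rpow hδ0.le, Real.rpow_neg hδ0.le]
  linarith [heq ▸ hmain]


/-- Harvey–Polking criterion, `Lᵖ` version. -/
theorem memLp_infDist_rpow {N : ℕ} (Ω : Set (EuclideanSpace ℝ (Fin N)))
    (hΩo : IsOpen Ω) (hΩb : Bornology.IsBounded Ω)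
    (A : Set (EuclideanSpace ℝ (Fin N))) (hAne : A.Nonempty)
    (hAb : Bornology.IsBounded A) (hAΩ : closure A ⊆ Ω) (hA0 : MeasureTheory.volume A = 0)
    (p γ : ℝ) (hp : 1 < p) (hγ : 0 < γ)
    (hγdim : γ < (1 / p) * ((N : ℝ) - upperBoxDim A)) :
    MeasureTheory.MemLp (fun x => Metric.infDist x A ^ (-γ)) (ENNReal.ofReal p)
      (MeasureTheory.volume.restrict Ω) := by
  classical
  have hppos : (0:ℝ) < p := lt_trans one_pos hp
  rcases Nat.eq_zero_or_pos N with hN0 | hN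
  · subst hN0
    have hf : (fun x : EuclideanSpace ℝ (Fin 0) => infDist x A ^ (-γ)) = fun _ => (0:ℝ) := by
      funext x
      obtain ⟨a, ha⟩ := hAne
      rw [Subsingleton.elim x a, infDist_zero_of_mem ha,
        Real.zero_rpow (neg_ne_zero.2 hγ.ne')]
    rw [hf]
    exact memLp_const 0 |>.mono_measure (Measure.restrict_le_self) |>.mono_measure le_rfl
  haveI : Nontrivial (EuclideanSpace ℝ (Fin N)) := by
    refine ⟨⟨EuclideanSpace.single ⟨0, hN⟩ 1, 0, fun h => ?_⟩⟩
    have := congrArg (fun v : EuclideanSpace ℝ (Fin N) => v ⟨0, hN⟩) h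
    simp [EuclideanSpace.single_apply] at this
  have hAtb : TotallyBounded A := hAb.isCompact_closure.totallyBounded.subset subset_closure
  set D := upperBoxDim A with hD
  have hβD : p * γ < (N:ℝ) - D := by
    have h1 : p * γ < p * ((1/p) * ((N:ℝ) - D)) := (mul_lt_mul_iff_right₀ hppos).2 hγdim
    have h2 : p * ((1/p) * ((N:ℝ) - D)) = (N:ℝ) - D := by field_simp
    linarith [h2 ▸ h1]
  set β := p * γ with hβdef
  have hβpos : 0 < β := mul_pos hppos hγ
  set s := (D + ((N:ℝ) - β))/2 with hs_def
  have hDs : D < s := by rw [hs_def]; linarith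
  have hα : 0 < (N:ℝ) - s - β := by rw [hs_def]; linarith
  set α := (N:ℝ) - s - β with hαdef
  have hev := eventually_coveringNumber_le hN hAb hAne hDs
  obtain ⟨ε, hε, hevε⟩ : ∃ ε > 0, ∀ δ : ℝ, 0 < δ → δ < ε →
      (coveringNumber δ A : ℝ) ≤ δ ^ (-s) := by
    rw [eventually_nhdsWithin_iff, Metric.eventually_nhds_iff] at hev
    obtain ⟨ε, hε, h⟩ := hev
    exact ⟨ε, hε, fun δ h1 h2 =>
      h (by simpa [Real.dist_eq, abs_of_pos h1] using h2) h1⟩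
  set r := min (ε/2) (2⁻¹ : ℝ) with hrdef
  have hr0 : 0 < r := lt_min (by linarith) (by norm_num)
  have hrε : r < ε := lt_of_le_of_lt (min_le_left _ _) (by linarith)
  have hr1 : r ≤ 2⁻¹ := min_le_right _ _
  set d := fun x : EuclideanSpace ℝ (Fin N) => infDist x A with hd
  have hdcont : Continuous d := continuous_infDist_pt A
  have hmeas : Measurable fun x => d x ^ (-γ) := by
    have hfeq : (fun x => d x ^ (-γ)) = fun x => ((d x ^ γ)⁻¹) := by
      funext x; rw [Real.rpow_neg infDist_nonneg]
    rw [hfeq]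
    exact ((Real.continuous_rpow_const hγ.le).comp hdcont).measurable.inv
  refine ⟨hmeas.aestronglyMeasurable, ?_⟩
  rw [eLpNorm_lt_top_iff_lintegral_rpow_enorm_lt_top
    (ENNReal.ofReal_pos.2 hppos).ne' ENNReal.ofReal_ne_top]
  rw [ENNReal.toReal_ofReal hppos.le]
  have hint : ∀ x, ‖d x ^ (-γ)‖ₑ ^ p = ENNReal.ofReal (d x ^ (-β)) := by
    intro x
    have h1 : (0:ℝ) ≤ d x ^ (-γ) := Real.rpow_nonneg infDist_nonneg _
    rw [← ofReal_norm, Real.norm_of_nonneg h1,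
      ENNReal.ofReal_rpow_of_nonneg h1 hppos.le]
    congr 1
    rw [← Real.rpow_mul infDist_nonneg]
    congr 1; rw [hβdef]; ring
  rw [lintegral_congr hint]
  set g := fun x => ENNReal.ofReal (d x ^ (-β)) with hg
  set K := volume (ball (0:EuclideanSpace ℝ (Fin N)) 1) with hK
  have hKfin : K < ⊤ := measure_ball_lt_top
  set T0 : Set (EuclideanSpace ℝ (Fin N)) := {x | d x = 0} with hT0
  set S1 : Set (EuclideanSpace ℝ (Fin N)) := Ω ∩ {x | r ≤ d x} with hS1
  set Ek : ℕ → Set (EuclideanSpace ℝ (Fin N)) :=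
    fun k => {x | r * 2⁻¹^(k+1) ≤ d x ∧ d x < r * 2⁻¹^k} with hEk
  have hcover : Ω ⊆ S1 ∪ (T0 ∪ ⋃ k, Ek k) := by
    intro x hx
    rcases le_or_gt r (d x) with h | h
    · exact Or.inl ⟨hx, h⟩
    rcases eq_or_lt_of_le (infDist_nonneg : 0 ≤ d x) with h0 | h0
    · exact Or.inr (Or.inl h0.symm)
    refine Or.inr (Or.inr ?_)
    have hex : ∃ k : ℕ, r * 2⁻¹^k ≤ d x := by
      obtain ⟨k, hk⟩ := exists_pow_lt_of_lt_one (div_pos h0 hr0) (by norm_num : (2⁻¹:ℝ) < 1)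
      rw [lt_div_iff₀ hr0] at hk
      exact ⟨k, by linarith [mul_comm ((2⁻¹:ℝ)^k) r]⟩
    have hk0pos : 0 < Nat.find hex := by
      rcases Nat.eq_zero_or_pos (Nat.find hex) with h' | h'
      · exfalso
        have hsp := Nat.find_spec hex
        rw [h'] at hsp; simp at hsp; linarith
      · exact h'
    refine mem_iUnion.2 ⟨Nat.find hex - 1, ?_, ?_⟩
    · have := Nat.find_spec hex
      rwa [show Nat.find hex - 1 + 1 = Nat.find hex by omega]
    · have hmin := Nat.find_min hex (show Nat.find hex - 1 < Nat.find hex by omega)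
      push_neg at hmin
      exact hmin
  have hB1 : ∫⁻ x in S1, g x ≤ ENNReal.ofReal (r ^ (-β)) * volume Ω := by
    calc ∫⁻ x in S1, g x ≤ ∫⁻ _x in S1, ENNReal.ofReal (r ^ (-β)) :=
          setLIntegral_mono measurable_const (fun x hx => ENNReal.ofReal_le_ofReal
            (Real.rpow_le_rpow_of_nonpos hr0 hx.2 (neg_nonpos.2 hβpos.le)))
      _ = ENNReal.ofReal (r ^ (-β)) * volume S1 := setLIntegral_const _ _
      _ ≤ ENNReal.ofReal (r ^ (-β)) * volume Ω :=
          mul_le_mul_right (measure_mono inter_subset_left) _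
  have hB0 : ∫⁻ x in T0, g x = 0 := by
    have hT0meas : MeasurableSet T0 := hdcont.measurable (measurableSet_singleton 0)
    have hz : ∀ x ∈ T0, g x = 0 := by
      intro x hx
      simp only [hg]
      rw [show d x = 0 from hx, Real.zero_rpow (neg_ne_zero.2 hβpos.ne')]
      simp
    calc ∫⁻ x in T0, g x = ∫⁻ _x in T0, 0 := setLIntegral_congr_fun hT0meas hz
      _ = 0 := by simp
  set q : ℝ := (2⁻¹:ℝ) ^ α with hq
  have hq0 : 0 < q := Real.rpow_pos_of_pos (by norm_num) _
  have hq1 : q < 1 := Real.rpow_lt_one (by norm_num) (by norm_num) hα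
  set c : ℝ := 3^N * (r * 2⁻¹) ^ α with hc
  have hc0 : 0 < c := by positivity
  have hEkb : ∀ k : ℕ, ∫⁻ x in Ek k, g x ≤ ENNReal.ofReal (c * q^k) * K := by
    intro k
    set δk : ℝ := r * 2⁻¹^(k+1) with hδk
    have hδkpos : 0 < δk := by positivity
    have hpowle : (2⁻¹:ℝ)^(k+1) ≤ 2⁻¹ := by
      calc (2⁻¹:ℝ)^(k+1) ≤ (2⁻¹:ℝ)^1 :=
            pow_le_pow_of_le_one (by norm_num) (by norm_num) (by omega)
        _ = 2⁻¹ := pow_one _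
    have hδkr : δk ≤ r * 2⁻¹ := by
      rw [hδk]
      exact mul_le_mul_of_nonneg_left hpowle hr0.le
    have hδkε : δk < ε := by nlinarith
    have hcovb := hevε δk hδkpos hδkε
    have h2δ : 2 * δk = r * 2⁻¹^k := by rw [hδk, pow_succ]; ring
    have hstep1 : ∫⁻ x in Ek k, g x ≤ ENNReal.ofReal (δk ^ (-β)) * volume (Ek k) := by
      calc ∫⁻ x in Ek k, g x ≤ ∫⁻ _x in Ek k, ENNReal.ofReal (δk ^ (-β)) :=
            setLIntegral_mono measurable_const (fun x hx => ENNReal.ofReal_le_ofReal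
              (Real.rpow_le_rpow_of_nonpos hδkpos hx.1 (neg_nonpos.2 hβpos.le)))
        _ = _ := setLIntegral_const _ _
    have hsub : Ek k ⊆ {x | d x < 2*δk} := by
      intro x hx
      rw [mem_setOf_eq, h2δ]
      exact hx.2
    have hstep2 : volume (Ek k) ≤
        (coveringNumber δk A) * (ENNReal.ofReal ((3*δk)^N) * K) :=
      le_trans (measure_mono hsub) (measure_thick_le A hAne hAtb hδkpos)
    have hstep3 : (coveringNumber δk A : ℝ≥0∞) ≤ ENNReal.ofReal (δk ^ (-s)) := by
      rw [← ENNReal.ofReal_natCast]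
      exact ENNReal.ofReal_le_ofReal hcovb
    have hreal : δk^(-β) * (δk^(-s) * (3*δk)^N) = c * q^k := by
      have h3 : ((3*δk:ℝ))^N = 3^N * δk^((N:ℕ):ℝ) := by
        rw [mul_pow, Real.rpow_natCast]
      have h4 : δk^(-β) * (δk^(-s) * (3^N * δk^((N:ℕ):ℝ))) = 3^N * δk ^ α := by
        calc δk^(-β) * (δk^(-s) * (3^N * δk^((N:ℕ):ℝ)))
            = 3^N * (δk^(-β) * δk^(-s) * δk^((N:ℕ):ℝ)) := by ring
          _ = 3^N * δk^(-β + -s + N) := by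
              rw [← Real.rpow_add hδkpos, ← Real.rpow_add hδkpos]
          _ = 3^N * δk^α := by
              congr 1
              rw [hαdef]
              congr 1
              ring
      have h5 : δk ^ α = (r * 2⁻¹)^α * q^k := by
        have he : δk = (r * 2⁻¹) * (2⁻¹:ℝ)^k := by rw [hδk, pow_succ]; ring
        rw [he, Real.mul_rpow (by positivity) (by positivity)]
        congr 1
        rw [hq, ← Real.rpow_natCast (2⁻¹:ℝ) k, ← Real.rpow_mul (by norm_num : (0:ℝ) ≤ 2⁻¹),
          mul_comm (k:ℝ) α, Real.rpow_mul (by norm_num : (0:ℝ) ≤ 2⁻¹), Real.rpow_natCast]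
      rw [h3, h4, h5, hc]
      ring
    calc ∫⁻ x in Ek k, g x
        ≤ ENNReal.ofReal (δk ^ (-β)) * ((coveringNumber δk A) *
            (ENNReal.ofReal ((3*δk)^N) * K)) := hstep1.trans (mul_le_mul_right hstep2 _)
      _ ≤ ENNReal.ofReal (δk ^ (-β)) * (ENNReal.ofReal (δk ^ (-s)) *
            (ENNReal.ofReal ((3*δk)^N) * K)) :=
          mul_le_mul_right (mul_le_mul_left hstep3 _) _
      _ = ENNReal.ofReal (δk^(-β) * (δk^(-s) * (3*δk)^N)) * K := by
          rw [ENNReal.ofReal_mul (by positivity), ENNReal.ofReal_mul (by positivity)]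
          ring
      _ = ENNReal.ofReal (c * q^k) * K := by rw [hreal]
  have hsum : (∑' k, ∫⁻ x in Ek k, g x) < ⊤ := by
    apply lt_of_le_of_lt (ENNReal.tsum_le_tsum hEkb)
    have he : ∀ k:ℕ, ENNReal.ofReal (c * q^k) * K =
        (ENNReal.ofReal c * K) * (ENNReal.ofReal q)^k := by
      intro k
      rw [ENNReal.ofReal_mul hc0.le, ENNReal.ofReal_pow hq0.le]
      ring
    simp only [he]
    rw [ENNReal.tsum_mul_left]
    apply ENNReal.mul_lt_top
    · exact ENNReal.mul_lt_top ENNReal.ofReal_lt_top hKfin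
    · rw [ENNReal.tsum_geometric]
      apply ENNReal.inv_lt_top.2
      rw [tsub_pos_iff_lt]
      exact ENNReal.ofReal_lt_one.2 hq1
  calc ∫⁻ x in Ω, ENNReal.ofReal (d x ^ (-β)) ∂volume
      ≤ ∫⁻ x in S1 ∪ (T0 ∪ ⋃ k, Ek k), g x := lintegral_mono_set hcover
    _ ≤ (∫⁻ x in S1, g x) + ∫⁻ x in T0 ∪ ⋃ k, Ek k, g x := lintegral_union_le _ _ _
    _ ≤ (∫⁻ x in S1, g x) + ((∫⁻ x in T0, g x) + ∫⁻ x in ⋃ k, Ek k, g x) :=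
        add_le_add_right (lintegral_union_le _ _ _) _
    _ ≤ (∫⁻ x in S1, g x) + ((∫⁻ x in T0, g x) + ∑' k, ∫⁻ x in Ek k, g x) :=
        add_le_add_right (add_le_add_right (lintegral_iUnion_le _ _) _) _
    _ < ⊤ := by
        apply ENNReal.add_lt_top.2
        constructor
        · exact lt_of_le_of_lt hB1 (ENNReal.mul_lt_top ENNReal.ofReal_lt_top hΩb.measure_lt_top)
        · apply ENNReal.add_lt_top.2
          exact ⟨by rw [hB0]; exact ENNReal.zero_lt_top, hsum⟩
end
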